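/- For every integer h ≥ 3, the polynomial p_h(t) = t^{4h} − t^{4h−1} + t^{2h} − t + 1 in ℤ[t] is not a product of cyclotomic polynomials; that is, there is no finite multiset S of positive integers such that p_h = ∏_{n ∈ S} Φ_n. -/

import Mathlib

open Polynomial

namespace CycAux

noncomputable def geom (z : ℂ) : PowerSeries ℂ := PowerSeries.mk fun k => z ^ (k + 1)

noncomputable def Pm (R : Multiset ℂ) : ℂ[X] := (R.map (fun z => 1 - C z * X)).prod

noncomputable def Gm (R : Multiset ℂ) : PowerSeries ℂ :=
  PowerSeries.mk fun k => (R.map fun z => z ^ (k + 1)).sum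

lemma one_sub_mul_geom (z : ℂ) :
    ((1 - C z * X : ℂ[X]) : PowerSeries ℂ) * geom z = PowerSeries.C z := by
  have : ((1 - C z * X : ℂ[X]) : PowerSeries ℂ)
      = 1 - PowerSeries.C z * PowerSeries.X := by
    simp [Polynomial.coe_sub, Polynomial.coe_mul, Polynomial.coe_C, Polynomial.coe_X,
      Polynomial.coe_one]
  rw [this, sub_mul, one_mul, mul_assoc]
  ext n
  cases n with
  | zero => simp [geom, PowerSeries.coeff_mk]
  | succ n =>
    simp only [map_sub, PowerSeries.coeff_mk, PowerSeries.coeff_C_mul]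
    rw [PowerSeries.coeff_succ_X_mul]
    simp [geom, PowerSeries.coeff_mk, pow_succ, PowerSeries.coeff_C]
    ring
end CycAux

namespace CycAux

lemma coe_one_sub (z : ℂ) : ((1 - C z * X : ℂ[X]) : PowerSeries ℂ)
    = 1 - PowerSeries.C z * PowerSeries.X := by
  simp [Polynomial.coe_sub, Polynomial.coe_mul, Polynomial.coe_C, Polynomial.coe_X,
    Polynomial.coe_one]

lemma Gm_cons (z : ℂ) (R : Multiset ℂ) : Gm (z ::ₘ R) = geom z + Gm R := by
  ext n
  simp [Gm, geom, PowerSeries.coeff_mk, Multiset.map_cons]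

lemma key (R : Multiset ℂ) :
    (Pm R : PowerSeries ℂ) * Gm R = -((derivative (Pm R) : ℂ[X]) : PowerSeries ℂ) := by
  induction R using Multiset.induction with
  | empty =>
    simp [Pm, Gm]
    ext n
    simp [PowerSeries.coeff_mk]
  | cons z R ih =>
    have hP : Pm (z ::ₘ R) = (1 - C z * X) * Pm R := by
      simp [Pm, Multiset.map_cons, Multiset.prod_cons]
    have hd : derivative ((1 - C z * X) * Pm R) = -C z * Pm R + (1 - C z * X) * derivative (Pm R) := by
      rw [derivative_mul]; simp
    rw [hP, Gm_cons, hd]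
    rw [Polynomial.coe_mul, Polynomial.coe_add, Polynomial.coe_mul, Polynomial.coe_mul,
      Polynomial.coe_neg, Polynomial.coe_C]
    rw [mul_add]
    have e1 : ((1 - C z * X : ℂ[X]) : PowerSeries ℂ) * (Pm R : PowerSeries ℂ) * geom z
        = (Pm R : PowerSeries ℂ) * PowerSeries.C z := by
      rw [mul_comm ((1 - C z * X : ℂ[X]) : PowerSeries ℂ), mul_assoc, one_sub_mul_geom]
    have e2 : ((1 - C z * X : ℂ[X]) : PowerSeries ℂ) * (Pm R : PowerSeries ℂ) * Gm R
        = ((1 - C z * X : ℂ[X]) : PowerSeries ℂ) * -((derivative (Pm R) : ℂ[X]) : PowerSeries ℂ) := by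
      rw [mul_assoc, ih]
    rw [e1, e2, coe_one_sub]
    ring

end CycAux

namespace CycAux

noncomputable def pC (h : ℕ) : ℂ[X] :=
  X ^ (4 * h) - X ^ (4 * h - 1) + X ^ (2 * h) - X + 1

lemma pC_coeff (h : ℕ) (hh : 3 ≤ h) (k : ℕ) :
    (pC h).coeff k =
      if k = 0 ∨ k = 2 * h ∨ k = 4 * h then 1
      else if k = 1 ∨ k = 4 * h - 1 then -1 else 0 := by
  simp only [pC, coeff_add, coeff_sub, coeff_one, coeff_X, coeff_X_pow]
  split_ifs <;> first | omega | norm_num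

end CycAux

namespace CycAux

lemma pC_natDegree (h : ℕ) (hh : 3 ≤ h) : (pC h).natDegree = 4 * h := by
  unfold pC
  compute_degree!
  any_goals omega
  all_goals rw [if_neg (by omega : ¬ 4*h = 4*h - 1), if_neg (by omega : ¬ h = 0),
    if_neg (by omega : ¬ 1 = 4*h)]
  all_goals decide

lemma pC_monic (h : ℕ) (hh : 3 ≤ h) : (pC h).Monic := by
  have : (pC h).coeff (4 * h) = 1 := by
    rw [pC_coeff h hh]; simp
  rw [Monic, Polynomial.leadingCoeff, pC_natDegree h hh, this]

lemma pC_reflect (h : ℕ) (hh : 3 ≤ h) : reflect (4 * h) (pC h) = pC h := by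
  apply Polynomial.ext
  intro i
  rw [coeff_reflect]
  rcases le_or_gt i (4 * h) with hi | hi
  · rw [revAt_le hi, pC_coeff h hh, pC_coeff h hh]
    split_ifs <;> first | omega | norm_num
  · rw [revAt_eq_self_of_lt hi]

end CycAux

namespace CycAux

lemma reflect_lin (z : ℂ) : reflect 1 (X - C z : ℂ[X]) = 1 - C z * X := by
  ext i
  rw [coeff_reflect]
  match i with
  | 0 => simp [revAt_le]
  | 1 => simp [revAt_le, coeff_one, coeff_C]
  | (n+2) =>
    rw [revAt_eq_self_of_lt (by omega)]
    simp [coeff_one, coeff_X, coeff_C]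

lemma reflect_prod (R : Multiset ℂ) :
    reflect (Multiset.card R) ((R.map fun z => X - C z).prod) = Pm R := by
  induction R using Multiset.induction with
  | empty => simp [Pm]
  | cons z R ih =>
    simp only [Multiset.map_cons, Multiset.prod_cons, Multiset.card_cons, Pm]
    have hdeg : ((R.map fun z => X - C z).prod).natDegree ≤ Multiset.card R := by
      refine le_trans (Polynomial.natDegree_multiset_prod_le _) ?_
      rw [Multiset.map_map]
      have : (R.map fun z => ((X - C z : ℂ[X]).natDegree)) = R.map fun _ => 1 := by
        apply Multiset.map_congr rfl
        intro x _
        simp [natDegree_X_sub_C]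
      simp [Function.comp, natDegree_X_sub_C]
    rw [add_comm]
    rw [Polynomial.reflect_mul _ _ (natDegree_X_sub_C_le z) hdeg]
    rw [reflect_lin, ih, Pm]

end CycAux

namespace CycAux

lemma pC_coe (h : ℕ) : ((pC h : ℂ[X]) : PowerSeries ℂ)
    = 1 - PowerSeries.X ^ 1 + PowerSeries.X ^ (2*h)
      - PowerSeries.X ^ (4*h-1) + PowerSeries.X ^ (4*h) := by
  unfold pC
  rw [Polynomial.coe_add, Polynomial.coe_sub, Polynomial.coe_add, Polynomial.coe_sub,
    Polynomial.coe_pow, Polynomial.coe_pow, Polynomial.coe_pow, Polynomial.coe_X,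
    Polynomial.coe_one, pow_one]
  ring

lemma coeff_identity (h : ℕ) (hh : 3 ≤ h) (R : Multiset ℂ) (hPR : Pm R = pC h) (m : ℕ) :
    (PowerSeries.coeff m) (Gm R)
      - (if 1 ≤ m then (PowerSeries.coeff (m-1)) (Gm R) else 0)
      + (if 2*h ≤ m then (PowerSeries.coeff (m-2*h)) (Gm R) else 0)
      - (if 4*h-1 ≤ m then (PowerSeries.coeff (m-(4*h-1))) (Gm R) else 0)
      + (if 4*h ≤ m then (PowerSeries.coeff (m-4*h)) (Gm R) else 0)
    = -((pC h).coeff (m+1) * ((m : ℂ) + 1)) := by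
  have hk := key R
  rw [hPR, pC_coe] at hk
  have hx := congrArg (PowerSeries.coeff m) hk
  rw [add_mul, sub_mul, add_mul, sub_mul, one_mul] at hx
  rw [map_add, map_sub, map_add, map_sub] at hx
  rw [PowerSeries.coeff_X_pow_mul', PowerSeries.coeff_X_pow_mul',
    PowerSeries.coeff_X_pow_mul', PowerSeries.coeff_X_pow_mul'] at hx
  rw [hx, map_neg, Polynomial.coeff_coe, Polynomial.coeff_derivative]

end CycAux

namespace CycAux

section Values

variable {h : ℕ} {R : Multiset ℂ}

lemma v1 (hh : 3 ≤ h) (hPR : Pm R = pC h) :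
    ∀ m, m ≤ 2*h-2 → (PowerSeries.coeff m) (Gm R) = 1 := by
  intro m
  induction m with
  | zero =>
    intro _
    have e := coeff_identity h hh R hPR 0
    rw [if_neg (by omega), if_neg (by omega), if_neg (by omega), if_neg (by omega)] at e
    rw [pC_coeff h hh, if_neg (by omega), if_pos (by omega)] at e
    norm_num at e
    rw [PowerSeries.coeff_zero_eq_constantCoeff]
    exact e
  | succ m ih =>
    intro hm
    have e := coeff_identity h hh R hPR (m+1)
    rw [if_pos (by omega), if_neg (by omega), if_neg (by omega), if_neg (by omega)] at e
    rw [pC_coeff h hh, if_neg (by omega), if_neg (by omega)] at e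
    have hmm : m + 1 - 1 = m := by omega
    rw [hmm, ih (by omega)] at e
    norm_num at e
    linear_combination e

lemma v2 (hh : 3 ≤ h) (hPR : Pm R = pC h) :
    ∀ j, j ≤ 2*h-2 →
      (PowerSeries.coeff (2*h-1+j)) (Gm R) = 1 - 2*(h:ℂ) - (j:ℂ) := by
  intro j
  induction j with
  | zero =>
    intro _
    have e := coeff_identity h hh R hPR (2*h-1)
    rw [if_pos (by omega), if_neg (by omega), if_neg (by omega), if_neg (by omega)] at e
    have h1 : 2*h-1+1 = 2*h := by omega
    have h2 : 2*h-1-1 = 2*h-2 := by omega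
    rw [h1, h2, pC_coeff h hh, if_pos (by omega)] at e
    rw [v1 hh hPR (2*h-2) (by omega)] at e
    have h3 : ((2*h-1 : ℕ) : ℂ) = 2*(h:ℂ) - 1 := by
      push_cast [Nat.cast_sub (by omega : 1 ≤ 2*h)]; ring
    rw [h3] at e
    norm_num
    linear_combination e
  | succ j ih =>
    intro hj
    have e := coeff_identity h hh R hPR (2*h+j)
    rw [if_pos (by omega), if_pos (by omega), if_neg (by omega), if_neg (by omega)] at e
    have h1 : 2*h+j+1 = 2*h+(j+1) := by omega
    have h2 : 2*h+j-1 = 2*h-1+j := by omega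
    have h3 : 2*h+j-2*h = j := by omega
    rw [h1, h2, h3, pC_coeff h hh, if_neg (by omega), if_neg (by omega)] at e
    rw [ih (by omega), v1 hh hPR j (by omega)] at e
    have h4 : 2*h-1+(j+1) = 2*h+j := by omega
    rw [h4]
    push_cast at e ⊢
    linear_combination e

lemma w1 (hh : 3 ≤ h) (hPR : Pm R = pC h) :
    (PowerSeries.coeff (4*h-2)) (Gm R) = 1 := by
  have e := coeff_identity h hh R hPR (4*h-2)
  rw [if_pos (by omega), if_pos (by omega), if_neg (by omega), if_neg (by omega)] at e
  have h1 : 4*h-2+1 = 4*h-1 := by omega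
  have h2 : 4*h-2-1 = 2*h-1+(2*h-2) := by omega
  have h3 : 4*h-2-2*h = 2*h-2 := by omega
  rw [h1, h2, h3, pC_coeff h hh, if_neg (by omega), if_pos (by omega)] at e
  rw [v2 hh hPR (2*h-2) (by omega), v1 hh hPR (2*h-2) (by omega)] at e
  have h4 : ((4*h-2 : ℕ) : ℂ) = 4*(h:ℂ) - 2 := by
    push_cast [Nat.cast_sub (by omega : 2 ≤ 4*h)]; ring
  have h5 : ((2*h-2 : ℕ) : ℂ) = 2*(h:ℂ) - 2 := by
    push_cast [Nat.cast_sub (by omega : 2 ≤ 2*h)]; ring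
  rw [h4, h5] at e
  linear_combination e

lemma w2 (hh : 3 ≤ h) (hPR : Pm R = pC h) :
    (PowerSeries.coeff (4*h-1)) (Gm R) = 1 - 2*(h:ℂ) := by
  have e := coeff_identity h hh R hPR (4*h-1)
  rw [if_pos (by omega), if_pos (by omega), if_pos (by omega), if_neg (by omega)] at e
  have h1 : 4*h-1+1 = 4*h := by omega
  have h2 : 4*h-1-1 = 4*h-2 := by omega
  have h3 : 4*h-1-2*h = 2*h-1+0 := by omega
  have h4 : 4*h-1-(4*h-1) = 0 := by omega
  rw [h1, h2, h3, h4, pC_coeff h hh, if_pos (by omega)] at e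
  rw [w1 hh hPR, v2 hh hPR 0 (by omega), v1 hh hPR 0 (by omega)] at e
  have h5 : ((4*h-1 : ℕ) : ℂ) = 4*(h:ℂ) - 1 := by
    push_cast [Nat.cast_sub (by omega : 1 ≤ 4*h)]; ring
  rw [h5] at e
  push_cast at e ⊢
  linear_combination e

lemma w3 (hh : 3 ≤ h) (hPR : Pm R = pC h) :
    (PowerSeries.coeff (4*h)) (Gm R) = 1 := by
  have e := coeff_identity h hh R hPR (4*h)
  rw [if_pos (by omega), if_pos (by omega), if_pos (by omega), if_pos (by omega)] at e
  have h1 : 4*h-1 = 4*h-1 := rfl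
  have h2 : 4*h-2*h = 2*h-1+1 := by omega
  have h3 : 4*h-(4*h-1) = 1 := by omega
  have h4 : 4*h-4*h = 0 := by omega
  rw [h2, h3, h4, pC_coeff h hh, if_neg (by omega), if_neg (by omega)] at e
  rw [w2 hh hPR, v2 hh hPR 1 (by omega), v1 hh hPR 1 (by omega), v1 hh hPR 0 (by omega)] at e
  push_cast at e ⊢
  linear_combination e

lemma w4 (hh : 3 ≤ h) (hPR : Pm R = pC h) :
    (PowerSeries.coeff (4*h+1)) (Gm R) = 2*(h:ℂ) + 2 := by
  have e := coeff_identity h hh R hPR (4*h+1)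
  rw [if_pos (by omega), if_pos (by omega), if_pos (by omega), if_pos (by omega)] at e
  have h1 : 4*h+1-1 = 4*h := by omega
  have h2 : 4*h+1-2*h = 2*h-1+2 := by omega
  have h3 : 4*h+1-(4*h-1) = 2 := by omega
  have h4 : 4*h+1-4*h = 1 := by omega
  rw [h1, h2, h3, h4, pC_coeff h hh, if_neg (by omega), if_neg (by omega)] at e
  rw [w3 hh hPR, v2 hh hPR 2 (by omega), v1 hh hPR 2 (by omega), v1 hh hPR 1 (by omega)] at e
  push_cast at e ⊢
  linear_combination e

lemma w5 (hh : 3 ≤ h) (hPR : Pm R = pC h) :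
    (PowerSeries.coeff (4*h+2)) (Gm R) = 4*(h:ℂ) + 4 := by
  have e := coeff_identity h hh R hPR (4*h+2)
  rw [if_pos (by omega), if_pos (by omega), if_pos (by omega), if_pos (by omega)] at e
  have h1 : 4*h+2-1 = 4*h+1 := by omega
  have h2 : 4*h+2-2*h = 2*h-1+3 := by omega
  have h3 : 4*h+2-(4*h-1) = 3 := by omega
  have h4 : 4*h+2-4*h = 2 := by omega
  rw [h1, h2, h3, h4, pC_coeff h hh, if_neg (by omega), if_neg (by omega)] at e
  rw [w4 hh hPR, v2 hh hPR 3 (by omega), v1 hh hPR 3 (by omega), v1 hh hPR 2 (by omega)] at e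
  push_cast at e ⊢
  linear_combination e

end Values

end CycAux

open CycAux

theorem stmt_0 (h : ℕ) (hh : 3 ≤ h) :
    ¬ ∃ S : Multiset ℕ, (∀ n ∈ S, 0 < n) ∧
      ((X : ℤ[X]) ^ (4 * h) - X ^ (4 * h - 1) + X ^ (2 * h) - X + 1 =
        (S.map (fun n => cyclotomic n ℤ)).prod) := by
  rintro ⟨S, hpos, hEq⟩
  -- map the identity to ℂ
  have hq : ((X : ℤ[X]) ^ (4 * h) - X ^ (4 * h - 1) + X ^ (2 * h) - X + 1).map
      (Int.castRingHom ℂ) = pC h := by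
    simp [pC, Polynomial.map_add, Polynomial.map_sub, Polynomial.map_pow,
      Polynomial.map_one, Polynomial.map_X]
  have hcyc : pC h = (S.map fun n => cyclotomic n ℂ).prod := by
    rw [← hq, hEq, Polynomial.map_multiset_prod, Multiset.map_map]
    congr 1
    apply Multiset.map_congr rfl
    intro n _
    simp [map_cyclotomic]
  set R : Multiset ℂ := (pC h).roots with hR
  have hsplits : (pC h).Splits := IsAlgClosed.splits _
  have hsplit : pC h = (R.map fun z => X - C z).prod := by
    simpa using hsplits.eq_prod_roots_of_monic (pC_monic h hh)
  have hcard : Multiset.card R = 4 * h := by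
    rw [hR, (splits_iff_card_roots).mp hsplits, pC_natDegree h hh]
  have hPR : Pm R = pC h := by
    have := reflect_prod R
    rw [hcard, ← hsplit, pC_reflect h hh] at this
    exact this.symm
  -- all roots have norm 1
  have hnorm : ∀ z ∈ R, ‖z‖ = 1 := by
    intro z hz
    have hzr : (pC h).eval z = 0 := by
      have := Polynomial.isRoot_of_mem_roots hz
      exact this
    rw [hcyc, Polynomial.eval_multiset_prod] at hzr
    rw [Multiset.prod_eq_zero_iff] at hzr
    rw [Multiset.mem_map] at hzr
    obtain ⟨q, hq1, hq2⟩ := hzr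
    rw [Multiset.mem_map] at hq1
    obtain ⟨n, hn, rfl⟩ := hq1
    have hdvd := cyclotomic.dvd_X_pow_sub_one n ℂ
    obtain ⟨c, hc⟩ := hdvd
    have : z ^ n - 1 = 0 := by
      have := congrArg (Polynomial.eval z) hc
      simp only [Polynomial.eval_sub, Polynomial.eval_pow, Polynomial.eval_X,
        Polynomial.eval_one, Polynomial.eval_mul] at this
      rw [this, hq2, zero_mul]
    exact Complex.norm_eq_one_of_pow_eq_one (by linear_combination this)
      (Nat.pos_iff_ne_zero.mp (hpos n hn))
  -- the key coefficient value
  have hval : (PowerSeries.coeff (4*h+2)) (Gm R) = 4*(h:ℂ) + 4 := w5 hh hPR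
  have hsum : (PowerSeries.coeff (4*h+2)) (Gm R)
      = (R.map fun z => z ^ (4*h+3)).sum := by
    simp [Gm, PowerSeries.coeff_mk]
  have hbound : ‖(R.map fun z => z ^ (4*h+3)).sum‖ ≤ 4*(h:ℝ) := by
    refine le_trans (norm_multiset_sum_le _) ?_
    rw [Multiset.map_map]
    have : (R.map fun z => ‖z ^ (4*h+3)‖) = R.map fun _ => (1:ℝ) := by
      apply Multiset.map_congr rfl
      intro z hz
      rw [norm_pow, hnorm z hz, one_pow]
    simp only [Function.comp_def]
    rw [this, Multiset.map_const', Multiset.sum_replicate, hcard]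
    simp
  rw [hsum] at hval
  rw [hval] at hbound
  have hn4 : ‖4*(h:ℂ) + 4‖ = 4*(h:ℝ) + 4 := by
    have : 4*(h:ℂ) + 4 = ((4*h+4 : ℕ) : ℂ) := by push_cast; ring
    rw [this, Complex.norm_natCast]
    push_cast; ring
  rw [hn4] at hbound
  linarith
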